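/- The space F_n^{log} = {((z_i)_{1≤i≤n}, (w_{ij})_{1≤i<j≤n}) | z_j − z_i = e^{w_{ij}} for all i < j}, topologized as a subspace of ℂ^n × ℂ^{n(n−1)/2}, admits a covering map p : F_n^{log} → F_n, given by forgetting the coordinates w_{ij}, whose fiber over any point is in bijection with ℤ^{n(n−1)/2}. -/

import Mathlib

noncomputable section

abbrev ConfigSpace (n : ℕ) : Type := { z : Fin n → ℂ // Function.Injective z }

abbrev Pairs (n : ℕ) : Type := { p : Fin n × Fin n // p.1 < p.2 }

/-- The space `F_n^{log}`: configurations together with a choice of logarithm `w_{ij}` of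
`z_j - z_i` for each `i < j`, topologized as a subspace of `ℂ^n × ℂ^{n(n-1)/2}`. -/
abbrev LogConfigSpace (n : ℕ) : Type :=
  { zw : (Fin n → ℂ) × (Pairs n → ℂ) //
      ∀ p : Pairs n, zw.1 p.1.2 - zw.1 p.1.1 = Complex.exp (zw.2 p) }

/-- The covering map `p : F_n^{log} → F_n` forgetting the logarithms. -/
def logProj (n : ℕ) : C(LogConfigSpace n, ConfigSpace n) where
  toFun x := ⟨x.1.1, by
    intro i j h
    by_contra hne
    rcases lt_or_gt_of_ne hne with hlt | hlt
    · have h2 := x.2 ⟨(i, j), hlt⟩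
      rw [h, sub_self] at h2
      exact Complex.exp_ne_zero _ h2.symm
    · have h2 := x.2 ⟨(j, i), hlt⟩
      rw [h, sub_self] at h2
      exact Complex.exp_ne_zero _ h2.symm⟩
  continuous_toFun := by
    apply Continuous.subtype_mk
    exact continuous_fst.comp continuous_subtype_val

open Complex Topology

namespace LogCover

variable {n : ℕ}

/-- The difference `z_{p.2} - z_{p.1}`. -/
def dd (n : ℕ) (p : Pairs n) (z : Fin n → ℂ) : ℂ := z p.1.2 - z p.1.1

lemma continuous_dd (p : Pairs n) : Continuous (dd n p) :=
  (continuous_apply _).sub (continuous_apply _)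

lemma dd_ne_zero (p : Pairs n) (b : ConfigSpace n) : dd n p b.1 ≠ 0 := by
  intro h
  have := b.2 (sub_eq_zero.mp h)
  exact absurd this (ne_of_gt p.2)

lemma dd_logProj (p : Pairs n) (x : LogConfigSpace n) :
    dd n p x.1.1 = Complex.exp (x.1.2 p) := x.2 p

lemma dd_ne_zero' (p : Pairs n) (x : LogConfigSpace n) : dd n p x.1.1 ≠ 0 := by
  rw [dd_logProj]; exact Complex.exp_ne_zero _

/-- Local branch of logarithm adapted to the base point `b`. -/
def branch (b : ConfigSpace n) (p : Pairs n) (ζ : ℂ) : ℂ :=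
  Complex.log (ζ / dd n p b.1) + Complex.log (dd n p b.1)

lemma exp_branch (b : ConfigSpace n) (p : Pairs n) {ζ : ℂ} (hζ : ζ ≠ 0) :
    Complex.exp (branch b p ζ) = ζ := by
  rw [branch, Complex.exp_add, Complex.exp_log (div_ne_zero hζ (dd_ne_zero p b)),
    Complex.exp_log (dd_ne_zero p b), div_mul_cancel₀ _ (dd_ne_zero p b)]

/-- The base open set for the trivialization around `b`. -/
def baseU (b : ConfigSpace n) : Set (ConfigSpace n) :=
  {z | ∀ p : Pairs n, dd n p z.1 / dd n p b.1 ∈ Complex.slitPlane}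

lemma isOpen_baseU (b : ConfigSpace n) : IsOpen (baseU b) := by
  have : baseU b = ⋂ p : Pairs n,
      (fun z : ConfigSpace n => dd n p z.1 / dd n p b.1) ⁻¹' Complex.slitPlane := by
    ext z; simp [baseU]
  rw [this]
  exact isOpen_iInter_of_finite fun p =>
    Complex.isOpen_slitPlane.preimage (((continuous_dd p).comp continuous_subtype_val).div_const _)

lemma mem_baseU_self (b : ConfigSpace n) : b ∈ baseU b := fun p => by
  rw [div_self (dd_ne_zero p b)]; exact Complex.one_mem_slitPlane

lemma two_pi_I_ne_zero : (2 * (Real.pi : ℂ) * Complex.I) ≠ 0 := by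
  simp [Real.pi_ne_zero, Complex.I_ne_zero]

/-- The winding integers of a point of `LogConfigSpace` relative to the branch at `b`. -/
def kfun (b : ConfigSpace n) (x : LogConfigSpace n) (p : Pairs n) : ℤ :=
  round (((x.1.2 p - branch b p (dd n p x.1.1)) / (2 * (Real.pi : ℂ) * Complex.I)).re)

lemma exists_int (b : ConfigSpace n) (x : LogConfigSpace n) (p : Pairs n) :
    ∃ m : ℤ, x.1.2 p = branch b p (dd n p x.1.1) + m * (2 * (Real.pi : ℂ) * Complex.I) := by
  have h1 : Complex.exp (x.1.2 p) = dd n p x.1.1 := (dd_logProj p x).symm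
  have h2 : Complex.exp (branch b p (dd n p x.1.1)) = dd n p x.1.1 :=
    exp_branch b p (dd_ne_zero' p x)
  exact Complex.exp_eq_exp_iff_exists_int.mp (h1.trans h2.symm)

lemma kfun_eq (b : ConfigSpace n) (x : LogConfigSpace n) (p : Pairs n) (m : ℤ)
    (h : x.1.2 p = branch b p (dd n p x.1.1) + m * (2 * (Real.pi : ℂ) * Complex.I)) :
    kfun b x p = m := by
  unfold kfun
  rw [h, add_sub_cancel_left, mul_div_cancel_right₀ _ two_pi_I_ne_zero]
  simp

lemma kfun_spec (b : ConfigSpace n) (x : LogConfigSpace n) (p : Pairs n) :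
    x.1.2 p = branch b p (dd n p x.1.1) + kfun b x p * (2 * (Real.pi : ℂ) * Complex.I) := by
  obtain ⟨m, hm⟩ := exists_int b x p
  rw [kfun_eq b x p m hm]; exact hm

lemma continuousOn_kfun (b : ConfigSpace n) (p : Pairs n) :
    ContinuousOn (fun x : LogConfigSpace n => kfun b x p) ((logProj n) ⁻¹' baseU b) := by
  set s := (logProj n) ⁻¹' baseU b with hs
  intro x hx
  have hg : ContinuousWithinAt
      (fun y : LogConfigSpace n =>
        ((y.1.2 p - branch b p (dd n p y.1.1)) / (2 * (Real.pi : ℂ) * Complex.I)).re) s x := by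
    apply Complex.continuous_re.continuousAt.comp_continuousWithinAt
    apply ContinuousWithinAt.div_const
    apply ContinuousWithinAt.sub
    · exact ((continuous_apply p).comp (continuous_snd.comp continuous_subtype_val)).continuousWithinAt
    · unfold branch
      apply ContinuousWithinAt.add _ continuousWithinAt_const
      have hcd : ContinuousWithinAt (fun y : LogConfigSpace n => dd n p y.1.1 / dd n p b.1) s x :=
        (((continuous_dd p).comp (continuous_fst.comp continuous_subtype_val)).div_const _).continuousWithinAt
      have hmem : dd n p x.1.1 / dd n p b.1 ∈ Complex.slitPlane := hx p
      exact hcd.clog hmem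
  -- the value is eventually constant
  have hev : ∀ᶠ y in nhdsWithin x s, kfun b y p = kfun b x p := by
    have hball : ∀ᶠ y in nhdsWithin x s,
        |((y.1.2 p - branch b p (dd n p y.1.1)) / (2 * (Real.pi : ℂ) * Complex.I)).re -
          ((x.1.2 p - branch b p (dd n p x.1.1)) / (2 * (Real.pi : ℂ) * Complex.I)).re| < 1/2 := by
      have := hg (Metric.ball_mem_nhds _ (by norm_num :
        (0:ℝ) < 1/2))
      filter_upwards [this] with y hy
      simpa [Real.dist_eq] using hy
    filter_upwards [hball, self_mem_nhdsWithin] with y hy hys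
    obtain ⟨my, hmy⟩ := exists_int b y p
    obtain ⟨mx, hmx⟩ := exists_int b x p
    have hry : ((y.1.2 p - branch b p (dd n p y.1.1)) / (2 * (Real.pi : ℂ) * Complex.I)).re = my := by
      rw [hmy, add_sub_cancel_left, mul_div_cancel_right₀ _ two_pi_I_ne_zero]; simp
    have hrx : ((x.1.2 p - branch b p (dd n p x.1.1)) / (2 * (Real.pi : ℂ) * Complex.I)).re = mx := by
      rw [hmx, add_sub_cancel_left, mul_div_cancel_right₀ _ two_pi_I_ne_zero]; simp
    rw [hry, hrx] at hy
    have habs : |((my - mx : ℤ) : ℝ)| < 1/2 := by push_cast; simpa using hy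
    have hmm : my = mx := by
      have h1 : ((|my - mx| : ℤ) : ℝ) < 1 := by
        rw [Int.cast_abs]; linarith
      have h2 : |my - mx| < 1 := by exact_mod_cast h1
      have := abs_lt.mp h2
      omega
    rw [kfun_eq b y p my hmy, kfun_eq b x p mx hmx, hmm]
  exact Filter.Tendsto.congr' (Filter.EventuallyEq.symm hev) tendsto_const_nhds


/-- Explicit trivialization of `logProj n` over `baseU b`. -/
def triv (b : ConfigSpace n) : Bundle.Trivialization (Pairs n → ℤ) (logProj n) where
  toFun x := (logProj n x, kfun b x)
  invFun zk := ⟨(zk.1.1, fun p =>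
      branch b p (dd n p zk.1.1) + zk.2 p * (2 * (Real.pi : ℂ) * Complex.I)), by
    intro p
    show dd n p zk.1.1 = Complex.exp
      (branch b p (dd n p zk.1.1) + zk.2 p * (2 * (Real.pi : ℂ) * Complex.I))
    rw [Complex.exp_add, exp_branch b p (dd_ne_zero p zk.1),
      Complex.exp_int_mul_two_pi_mul_I, mul_one]⟩
  source := (logProj n) ⁻¹' baseU b
  target := baseU b ×ˢ Set.univ
  map_source' x hx := ⟨hx, Set.mem_univ _⟩
  map_target' zk hzk p := hzk.1 p
  left_inv' x _ := Subtype.ext (Prod.ext rfl (funext fun p => (kfun_spec b x p).symm))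
  right_inv' zk hzk := by
    apply Prod.ext
    · exact Subtype.ext rfl
    · funext p
      exact kfun_eq b _ p (zk.2 p) rfl
  open_source := (isOpen_baseU b).preimage (logProj n).continuous
  open_target := (isOpen_baseU b).prod isOpen_univ
  continuousOn_toFun :=
    ContinuousOn.prodMk ((logProj n).continuous.continuousOn)
      (continuousOn_pi.mpr fun p => continuousOn_kfun b p)
  continuousOn_invFun := by
    have hind : Topology.IsInducing
        (Subtype.val : LogConfigSpace n → (Fin n → ℂ) × (Pairs n → ℂ)) :=
      Topology.IsEmbedding.subtypeVal.isInducing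
    refine hind.continuousOn_iff.mpr ?_
    show ContinuousOn (fun zk : ConfigSpace n × (Pairs n → ℤ) =>
      ((zk.1.1, fun p => branch b p (dd n p zk.1.1) +
        zk.2 p * (2 * (Real.pi : ℂ) * Complex.I)) : (Fin n → ℂ) × (Pairs n → ℂ)))
      (baseU b ×ˢ Set.univ)
    apply ContinuousOn.prodMk
    · exact (continuous_subtype_val.comp continuous_fst).continuousOn
    · apply continuousOn_pi.mpr
      intro p
      apply ContinuousOn.add
      · apply ContinuousOn.add _ continuousOn_const
        intro zk hzk
        have hcd : ContinuousWithinAt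
            (fun zk : ConfigSpace n × (Pairs n → ℤ) => dd n p zk.1.1 / dd n p b.1)
            (baseU b ×ˢ Set.univ) zk :=
          (((continuous_dd p).comp (continuous_subtype_val.comp continuous_fst)).div_const
            _).continuousWithinAt
        have hmem : dd n p zk.1.1 / dd n p b.1 ∈ Complex.slitPlane := hzk.1 p
        exact hcd.clog hmem
      · apply ContinuousOn.mul _ continuousOn_const
        exact (continuous_of_discreteTopology.comp
          ((continuous_apply p).comp continuous_snd) :
            Continuous fun zk : ConfigSpace n × (Pairs n → ℤ) => ((zk.2 p : ℤ) : ℂ)).continuousOn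
  baseSet := baseU b
  open_baseSet := isOpen_baseU b
  source_eq := rfl
  target_eq := rfl
  proj_toFun x _ := rfl

end LogCover

/-- `p : F_n^{log} → F_n` is a covering map, and its fiber over any point is in bijection
with `ℤ^{n(n-1)/2}`. -/
theorem logProj_isCoveringMap (n : ℕ) :
    IsCoveringMap (logProj n) ∧
    ∀ b : ConfigSpace n, Nonempty ((logProj n ⁻¹' {b} : Set (LogConfigSpace n)) ≃ (Pairs n → ℤ)) := by
  constructor
  · exact IsCoveringMap.mk (logProj n) (fun _ => Pairs n → ℤ) (fun b => LogCover.triv b)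
      (fun b => LogCover.mem_baseU_self b)
  · intro b
    exact ⟨((LogCover.triv b).preimageSingletonHomeomorph
      (LogCover.mem_baseU_self b)).toEquiv⟩

end
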